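/- Let G ≅ Z_p act on a module M ≅ (Q_p/Z_p)^t × F with F finite, via a topological generator γ, such that the fixed points of (γ−1) acting on M form a finite group. Then the maximal divisible subgroup M_div = (Q_p/Z_p)^t satisfies M_div ⊆ (γ−1)M, and hence the cokernel M/(γ−1)M has order bounded by [M : M_div] = |F|, independent of the choice of γ (i.e., H^1(⟨γ⟩, M) ≅ M/(γ−1)M is finite of order at most |F|). -/

import Mathlib

/-- The additive subgroup `ℤ_p ⊆ ℚ_p`. -/
noncomputable def zpInQp (p : ℕ) [Fact p.Prime] : AddSubgroup ℚ_[p] :=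
  (PadicInt.Coe.ringHom (p := p)).range.toAddSubgroup

/-- The `p`-divisible group `ℚ_p/ℤ_p`. -/
abbrev qpModZp (p : ℕ) [Fact p.Prime] : Type := ℚ_[p] ⧸ zpInQp p

lemma mem_zpInQp {p : ℕ} [Fact p.Prime] {x : ℚ_[p]} : x ∈ zpInQp p ↔ ‖x‖ ≤ 1 := by
  constructor
  · rintro ⟨a, rfl⟩; exact a.2
  · intro h; exact ⟨⟨x, h⟩, rfl⟩

lemma qpModZp_div {p : ℕ} [Fact p.Prime] (n : ℕ) (hn : n ≠ 0) (x : qpModZp p) :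
    ∃ y, n • y = x := by
  obtain ⟨q, rfl⟩ := QuotientAddGroup.mk_surjective x
  refine ⟨QuotientAddGroup.mk (q / n), ?_⟩
  have : n • (QuotientAddGroup.mk (q / n) : qpModZp p)
      = QuotientAddGroup.mk (n • (q / n)) := by
    exact (map_nsmul (QuotientAddGroup.mk' (zpInQp p)) n (q / n)).symm
  rw [this]
  congr 1
  rw [nsmul_eq_mul, mul_comm]
  exact div_mul_cancel₀ q (Nat.cast_ne_zero.mpr hn)

lemma qpModZp_torsion {p : ℕ} [Fact p.Prime] (x : qpModZp p) : ∃ m : ℕ, p ^ m • x = 0 := by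
  obtain ⟨q, rfl⟩ := QuotientAddGroup.mk_surjective x
  have hp1 : (1 : ℝ) < (p : ℝ) := by
    exact_mod_cast (Fact.out : p.Prime).one_lt
  obtain ⟨m, hm⟩ := pow_unbounded_of_one_lt (R := ℝ) ‖q‖ hp1
  refine ⟨m, ?_⟩
  have h1 : (p ^ m) • (QuotientAddGroup.mk q : qpModZp p)
      = QuotientAddGroup.mk ((p ^ m : ℕ) • q) :=
    (map_nsmul (QuotientAddGroup.mk' (zpInQp p)) (p ^ m) q).symm
  rw [h1, QuotientAddGroup.eq_zero_iff, mem_zpInQp, nsmul_eq_mul]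
  have hnorm : ‖((p ^ m : ℕ) : ℚ_[p]) * q‖ = ((p : ℝ) ^ m)⁻¹ * ‖q‖ := by
    rw [norm_mul]
    congr 1
    push_cast
    rw [norm_pow, Padic.norm_p, inv_pow]
  rw [hnorm]
  have hppos : (0 : ℝ) < (p : ℝ) ^ m := by positivity
  rw [inv_mul_le_iff₀ hppos, mul_one]
  exact hm.le

lemma qpModZp_torsion_finite {p : ℕ} [Fact p.Prime] (m : ℕ) :
    {x : qpModZp p | p ^ m • x = 0}.Finite := by
  have hp0 : (p : ℚ_[p]) ≠ 0 := Nat.cast_ne_zero.mpr (Fact.out : p.Prime).pos.ne'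
  have hpm : ((p : ℚ_[p]) ^ m) ≠ 0 := pow_ne_zero _ hp0
  apply Set.Finite.subset (Set.finite_range
    (fun r : Fin (p ^ m) => (QuotientAddGroup.mk ((r : ℚ_[p]) / (p : ℚ_[p]) ^ m) : qpModZp p)))
  rintro x hx
  obtain ⟨q, rfl⟩ := QuotientAddGroup.mk_surjective x
  have hx0 : p ^ m • (QuotientAddGroup.mk q : qpModZp p) = 0 := hx
  have h1 : (QuotientAddGroup.mk ((p ^ m : ℕ) • q) : qpModZp p)
      = (p ^ m) • (QuotientAddGroup.mk q : qpModZp p) :=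
    map_nsmul (QuotientAddGroup.mk' (zpInQp p)) (p ^ m) q
  rw [hx0, QuotientAddGroup.eq_zero_iff] at h1
  obtain ⟨a, ha⟩ := h1
  -- a : ℤ_[p], ↑a = p^m • q
  have hq : q = PadicInt.Coe.ringHom (p := p) a / (p : ℚ_[p]) ^ m := by
    rw [eq_div_iff hpm, ha, nsmul_eq_mul]
    push_cast
    ring
  have hspec := PadicInt.appr_spec m a
  rw [Ideal.mem_span_singleton] at hspec
  obtain ⟨b, hb⟩ := hspec
  have hcast : (a : ℚ_[p]) - ((a.appr m : ℕ) : ℚ_[p]) = (p : ℚ_[p]) ^ m * (b : ℚ_[p]) := by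
    have := congrArg (PadicInt.Coe.ringHom (p := p)) hb
    push_cast at this ⊢
    exact_mod_cast this
  refine ⟨⟨a.appr m, PadicInt.appr_lt a m⟩, ?_⟩
  show QuotientAddGroup.mk _ = QuotientAddGroup.mk q
  rw [QuotientAddGroup.eq]
  refine ⟨b, ?_⟩
  show (b : ℚ_[p]) = -(((a.appr m : ℕ) : ℚ_[p]) / (p : ℚ_[p]) ^ m) + q
  rw [hq, ← neg_div, ← add_div, neg_add_eq_sub]
  show (b : ℚ_[p]) = ((a : ℚ_[p]) - _) / _
  rw [hcast, mul_div_cancel_left₀ _ hpm]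

theorem stmt15 (p : ℕ) [Fact p.Prime] (t : ℕ)
    (M : Type) [AddCommGroup M]
    (F : Type) [AddCommGroup F] [Finite F]
    (e : M ≃+ (Fin t → qpModZp p) × F)
    (γ : M ≃+ M) (σ : M →+ M) (hσ : ∀ x, σ x = γ x - x)
    (hker : Finite σ.ker)
    (Mdiv : AddSubgroup M)
    (hMdiv : Mdiv = AddSubgroup.map e.symm.toAddMonoidHom
      ((⊤ : AddSubgroup (Fin t → qpModZp p)).prod (⊥ : AddSubgroup F))) :
    Mdiv ≤ σ.range ∧ Nat.card (M ⧸ σ.range) ≤ Nat.card F := by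
  -- membership characterization
  have hmem : ∀ x : M, x ∈ Mdiv ↔ (e x).2 = 0 := by
    intro x
    rw [hMdiv]
    constructor
    · rintro ⟨⟨v, f⟩, hvf, rfl⟩
      obtain ⟨-, hf⟩ := hvf
      simp at hf
      simp [hf]
    · intro h
      exact ⟨e x, ⟨AddSubgroup.mem_top _, h⟩, e.symm_apply_apply x⟩
  -- divisibility of Mdiv
  have hdiv : ∀ x ∈ Mdiv, ∀ n : ℕ, n ≠ 0 → ∃ z ∈ Mdiv, n • z = x := by
    intro x hx n hn
    choose w hw using fun j => qpModZp_div n hn ((e x).1 j)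
    refine ⟨e.symm (w, 0), ?_, ?_⟩
    · rw [hmem]; simp
    · have h1 : n • e.symm ((w, 0) : (Fin t → qpModZp p) × F) = e.symm (n • (w, 0)) :=
        (map_nsmul e.symm (n) ((w, 0) : (Fin t → qpModZp p) × F)).symm
      rw [h1]
      have h2 : (n • ((w, 0) : (Fin t → qpModZp p) × F)) = e x := by
        have : (n • ((w, 0) : (Fin t → qpModZp p) × F)) = (n • w, n • (0 : F)) := rfl
        rw [this, smul_zero]
        have hfst : n • w = (e x).1 := funext hw
        have hsnd : (0 : F) = (e x).2 := ((hmem x).mp hx).symm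
        rw [hfst, hsnd]
      rw [h2, e.symm_apply_apply]
  -- γ preserves Mdiv
  have cardF_ne : Nat.card F ≠ 0 := Nat.card_pos.ne'
  have hγmem : ∀ x ∈ Mdiv, γ x ∈ Mdiv := by
    intro x hx
    obtain ⟨z, hz, hzx⟩ := hdiv x hx (Nat.card F) cardF_ne
    rw [hmem]
    have : γ x = Nat.card F • γ z := by rw [← hzx, map_nsmul]
    rw [this, map_nsmul]
    have : (Nat.card F • e (γ z)).2 = Nat.card F • (e (γ z)).2 := rfl
    rw [this]
    have : Nat.card F • (e (γ z)).2 = Nat.card F • (e (γ z)).2 := rfl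
    exact card_nsmul_eq_zero'
  -- σ preserves Mdiv
  have hσmem : ∀ x ∈ Mdiv, σ x ∈ Mdiv := by
    intro x hx
    rw [hσ]
    exact sub_mem (hγmem x hx) hx
  -- torsion of Mdiv
  have htor : ∀ x ∈ Mdiv, ∃ m : ℕ, p ^ m • x = 0 := by
    intro x hx
    choose ms hms using fun j => qpModZp_torsion ((e x).1 j)
    set N := Finset.univ.sup ms with hN
    refine ⟨N, ?_⟩
    apply e.injective
    rw [map_nsmul, map_zero]
    have h2 : (e x).2 = 0 := (hmem x).mp hx
    have : p ^ N • e x = (p ^ N • (e x).1, p ^ N • (e x).2) := rfl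
    rw [this, h2, smul_zero]
    refine Prod.ext ?_ rfl
    funext j
    show p ^ N • (e x).1 j = (0 : qpModZp p)
    have hle : ms j ≤ N := Finset.le_sup (Finset.mem_univ j)
    have : p ^ N = p ^ (N - ms j) * p ^ ms j := by
      rw [← pow_add, Nat.sub_add_cancel hle]
    rw [this, mul_smul, hms j, smul_zero]
  have key : Mdiv ≤ σ.range := by
    intro y hy
    set k := Nat.card σ.ker with hk
    have hk0 : k ≠ 0 := Nat.card_pos.ne'
    obtain ⟨z, hz, hzy⟩ := hdiv y hy (Nat.factorial k) (Nat.factorial_ne_zero k)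
    obtain ⟨m, hm⟩ := htor z hz
    -- torsion subgroup T
    let T : AddSubgroup M :=
      { carrier := {x | x ∈ Mdiv ∧ p ^ m • x = 0}
        zero_mem' := ⟨Mdiv.zero_mem, smul_zero _⟩
        add_mem' := by
          rintro a b ⟨ha1, ha2⟩ ⟨hb1, hb2⟩
          exact ⟨Mdiv.add_mem ha1 hb1, by rw [smul_add, ha2, hb2, add_zero]⟩
        neg_mem' := by
          rintro a ⟨ha1, ha2⟩
          exact ⟨Mdiv.neg_mem ha1, by rw [smul_neg, ha2, neg_zero]⟩ }
    have hTmem : ∀ x : M, x ∈ T ↔ x ∈ Mdiv ∧ p ^ m • x = 0 := fun _ => Iff.rfl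
    -- T is finite
    haveI : Finite T := by
      have hfin := qpModZp_torsion_finite (p := p) m
      haveI := hfin.to_subtype
      let f : T → (Fin t → {x : qpModZp p | p ^ m • x = 0}) := fun x j =>
        ⟨(e x.1).1 j, by
          have h0 : p ^ m • (x : M) = 0 := x.2.2
          have : p ^ m • e (x : M) = 0 := by rw [← map_nsmul, h0, map_zero]
          have h1 : (p ^ m • e (x : M)).1 j = (0 : qpModZp p) := by rw [this]; rfl
          exact h1⟩
      apply Finite.of_injective f
      intro x x' hxx
      have h1 : (e x.1).1 = (e x'.1).1 := by
        funext j
        exact congrArg Subtype.val (congrFun hxx j)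
      have h2 : (e x.1).2 = (e x'.1).2 := by
        rw [(hmem x.1).mp x.2.1, (hmem x'.1).mp x'.2.1]
      have : e x.1 = e x'.1 := Prod.ext h1 h2
      exact Subtype.ext (e.injective this)
    -- σ restricted to T
    have hσT : ∀ x : T, σ (x : M) ∈ T := by
      intro x
      refine ⟨hσmem _ x.2.1, ?_⟩
      rw [← map_nsmul, x.2.2, map_zero]
    let σT : T →+ T := (σ.domRestrict T).codRestrict T (fun x => hσT x)
    have hσTval : ∀ x : T, ((σT x : T) : M) = σ (x : M) := fun _ => rfl
    -- kernel bound
    have hkerT : Nat.card σT.ker ≤ k := by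
      have hinj : Function.Injective (fun x : σT.ker => (⟨(x : T), by
            have := x.2
            rw [AddMonoidHom.mem_ker] at this
            have h0 : ((σT x.1 : T) : M) = ((0 : T) : M) := congrArg _ this
            rw [hσTval] at h0
            exact h0⟩ : σ.ker)) := by
        intro a b hab
        have h := congrArg (fun y : σ.ker => (y : M)) hab
        exact Subtype.ext (Subtype.ext h)
      exact Nat.card_le_card_of_injective _ hinj
    -- quotient cardinality
    set R := σT.range with hR
    haveI : Finite (T ⧸ R) := Quotient.finite _
    have hcards : Nat.card (T ⧸ R) * Nat.card R = Nat.card σT.ker * Nat.card R := by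
      rw [← AddSubgroup.card_eq_card_quotient_mul_card_addSubgroup R]
      have e1 : Nat.card (T ⧸ σT.ker) = Nat.card R :=
        Nat.card_congr (QuotientAddGroup.quotientKerEquivRange σT).toEquiv
      rw [← e1, mul_comm, ← AddSubgroup.card_eq_card_quotient_mul_card_addSubgroup σT.ker]
    have hRpos : Nat.card R ≠ 0 := Nat.card_pos.ne'
    have hq : Nat.card (T ⧸ R) = Nat.card σT.ker :=
      Nat.eq_of_mul_eq_mul_right (Nat.pos_of_ne_zero hRpos) hcards
    have hqk : Nat.card (T ⧸ R) ≤ k := hq ▸ hkerT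
    have hq1 : 1 ≤ Nat.card (T ⧸ R) := Nat.card_pos
    have hdvd : Nat.card (T ⧸ R) ∣ Nat.factorial k := Nat.dvd_factorial hq1 hqk
    -- the element z
    let zT : T := ⟨z, hz, hm⟩
    have hzero : Nat.factorial k • (QuotientAddGroup.mk zT : T ⧸ R) = 0 := by
      obtain ⟨c, hc⟩ := hdvd
      rw [hc, mul_smul, card_nsmul_eq_zero']
    have hzmk : (QuotientAddGroup.mk (Nat.factorial k • zT) : T ⧸ R) = 0 := by
      rw [← hzero]
      exact map_nsmul (QuotientAddGroup.mk' R) (Nat.factorial k) zT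
    rw [QuotientAddGroup.eq_zero_iff] at hzmk
    obtain ⟨w, hw⟩ := hzmk
    refine ⟨(w : M), ?_⟩
    have : ((σT w : T) : M) = ((Nat.factorial k • zT : T) : M) := congrArg _ hw
    rw [hσTval] at this
    rw [this]
    have : ((Nat.factorial k • zT : T) : M) = Nat.factorial k • (zT : M) := rfl
    rw [this]
    exact hzy
  refine ⟨key, ?_⟩
  let ψ : M →+ F := (AddMonoidHom.snd _ _).comp e.toAddMonoidHom
  have hψsurj : Function.Surjective ψ := by
    intro f
    exact ⟨e.symm (0, f), by simp [ψ]⟩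
  have hψker : ψ.ker = Mdiv := by
    ext x
    rw [AddMonoidHom.mem_ker, hmem x]
    exact Iff.rfl
  have equivF : (M ⧸ ψ.ker) ≃+ F := QuotientAddGroup.quotientKerEquivOfSurjective ψ hψsurj
  haveI : Finite (M ⧸ ψ.ker) := Finite.of_equiv F equivF.toEquiv.symm
  have hcard1 : Nat.card (M ⧸ ψ.ker) = Nat.card F := Nat.card_congr equivF.toEquiv
  have hle : ψ.ker ≤ σ.range.comap (AddMonoidHom.id M) := by
    intro x hx
    exact key (hψker ▸ hx)
  have hsurj2 : Function.Surjective
      (QuotientAddGroup.map ψ.ker σ.range (AddMonoidHom.id M) hle) := by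
    intro c
    obtain ⟨y, rfl⟩ := QuotientAddGroup.mk_surjective c
    exact ⟨QuotientAddGroup.mk y, by rw [QuotientAddGroup.map_mk]; rfl⟩
  calc Nat.card (M ⧸ σ.range) ≤ Nat.card (M ⧸ ψ.ker) :=
        Nat.card_le_card_of_surjective _ hsurj2
    _ = Nat.card F := hcard1
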